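/- Let T = { (x,y,z) ∈ ℝ³ : √2(x − y) + z ≤ 1 } and X = T ∩ ℤ³. Then closure(conv X) = T. -/

import Mathlib

private lemma seg_mem {s : Set (ℝ × ℝ × ℝ)} (hs : Convex ℝ s) {u v p : ℝ × ℝ × ℝ} {t : ℝ}
    (h0 : 0 ≤ t) (h1 : t ≤ 1) (hu : u ∈ s) (hv : v ∈ s)
    (hp : p = (1 - t) • u + t • v) : p ∈ s := by
  rw [hp]; exact hs hu hv (by linarith) h0 (by ring)

private lemma smul_tuple (t u1 u2 u3 v1 v2 v3 : ℝ) :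
    (1-t) • ((u1,u2,u3) : ℝ×ℝ×ℝ) + t • (v1,v2,v3) =
      ((1-t)*u1+t*v1, (1-t)*u2+t*v2, (1-t)*u3+t*v3) := by
  simp [Prod.smul_mk, Prod.mk_add_mk, smul_eq_mul]

private lemma box_mem {s : Set (ℝ × ℝ × ℝ)} (hs : Convex ℝ s) (x y z : ℝ)
    (h : ∀ i j k : ℤ, (i : ℝ) ≤ x + 1 → y - 1 ≤ (j : ℝ) → (k : ℝ) ≤ z + 1 →
      ((i : ℝ), (j : ℝ), (k : ℝ)) ∈ s) :
    (x, y, z) ∈ s := by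
  have hx0 : (⌊x⌋ : ℝ) ≤ x := Int.floor_le x
  have hx1 : x < ⌊x⌋ + 1 := Int.lt_floor_add_one x
  have hy0 : (⌊y⌋ : ℝ) ≤ y := Int.floor_le y
  have hy1 : y < ⌊y⌋ + 1 := Int.lt_floor_add_one y
  have hz0 : (⌊z⌋ : ℝ) ≤ z := Int.floor_le z
  have hz1 : z < ⌊z⌋ + 1 := Int.lt_floor_add_one z
  have key : ∀ i k : ℤ, (i : ℝ) ≤ x + 1 → (k : ℝ) ≤ z + 1 → ((i : ℝ), y, (k : ℝ)) ∈ s := by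
    intro i k hi hk
    refine seg_mem hs (t := y - ⌊y⌋) (by linarith) (by linarith)
      (h i ⌊y⌋ k hi (by linarith) hk)
      (by simpa using h i (⌊y⌋ + 1) k hi (by push_cast; linarith) hk) ?_
    rw [smul_tuple]; simp only [Prod.mk.injEq]; refine ⟨by ring, by ring, by ring⟩
  have key2 : ∀ i : ℤ, (i : ℝ) ≤ x + 1 → ((i : ℝ), y, z) ∈ s := by
    intro i hi
    refine seg_mem hs (t := z - ⌊z⌋) (by linarith) (by linarith)
      (key i ⌊z⌋ hi (by linarith))
      (by simpa using key i (⌊z⌋ + 1) hi (by push_cast; linarith)) ?_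
    rw [smul_tuple]; simp only [Prod.mk.injEq]; refine ⟨by ring, by ring, by ring⟩
  refine seg_mem hs (t := x - ⌊x⌋) (by linarith) (by linarith)
    (key2 ⌊x⌋ (by linarith))
    (by simpa using key2 (⌊x⌋ + 1) (by push_cast; linarith)) ?_
  rw [smul_tuple]; simp only [Prod.mk.injEq]; refine ⟨by ring, by ring, by ring⟩

private lemma deep_mem {s : Set (ℝ × ℝ × ℝ)} (hs : Convex ℝ s)
    (hmem : ∀ i j k : ℤ, Real.sqrt 2 * ((i : ℝ) - (j : ℝ)) + (k : ℝ) ≤ 1 →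
      ((i : ℝ), (j : ℝ), (k : ℝ)) ∈ s)
    (x y z : ℝ) (h : Real.sqrt 2 * (x - y) + z ≤ -3) : (x, y, z) ∈ s := by
  apply box_mem hs
  intro i j k hi hj hk
  apply hmem
  have h2 : Real.sqrt 2 < 1.5 := by
    nlinarith [Real.sq_sqrt (by norm_num : (0:ℝ) ≤ 2), Real.sqrt_nonneg 2]
  nlinarith [mul_le_mul_of_nonneg_left (show (i:ℝ) - j ≤ (x - y) + 2 by linarith)
    (Real.sqrt_nonneg 2)]

private lemma dense_sqrt2 : ∀ s : ℝ, s < 1 →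
    ∃ m n : ℤ, s < Real.sqrt 2 * m + n ∧ Real.sqrt 2 * m + n < 1 := by
  intro s hs
  set S : AddSubgroup ℝ := AddSubgroup.zmultiples (Real.sqrt 2) ⊔ AddSubgroup.zmultiples 1 with hS
  have hdense : Dense (S : Set ℝ) := by
    rcases S.dense_or_cyclic with h | ⟨a, ha⟩
    · exact h
    · exfalso
      have h1 : (1:ℝ) ∈ S := AddSubgroup.mem_sup_right (AddSubgroup.mem_zmultiples 1)
      have h2 : Real.sqrt 2 ∈ S := AddSubgroup.mem_sup_left (AddSubgroup.mem_zmultiples _)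
      rw [ha, AddSubgroup.mem_closure_singleton] at h1 h2
      obtain ⟨p, hp⟩ := h1
      obtain ⟨q, hq⟩ := h2
      have hp0 : (p:ℝ) ≠ 0 := by
        intro h
        rw [zsmul_eq_mul, h] at hp; norm_num at hp
      refine irrational_sqrt_two ⟨(q : ℚ)/(p : ℚ), ?_⟩
      rw [zsmul_eq_mul] at hp hq
      have ha' : a = 1/(p:ℝ) := by field_simp at hp ⊢; linarith [hp]
      rw [ha'] at hq
      push_cast
      rw [← hq]; ring
  obtain ⟨x, hxS, hx1, hx2⟩ := hdense.exists_between hs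
  rw [SetLike.mem_coe, AddSubgroup.mem_sup] at hxS
  obtain ⟨u, hu, v, hv, huv⟩ := hxS
  rw [AddSubgroup.mem_zmultiples_iff] at hu hv
  obtain ⟨m, hm⟩ := hu
  obtain ⟨n, hn⟩ := hv
  refine ⟨m, n, ?_, ?_⟩ <;>
  · rw [zsmul_eq_mul] at hm hn
    have : Real.sqrt 2 * m + n = x := by rw [← huv, ← hm, ← hn]; ring
    rw [this]
    first | exact hx1 | exact hx2

theorem irrational_halfspace_closed_convexHull
    (T X : Set (ℝ × ℝ × ℝ))
    (hT : T = {p : ℝ × ℝ × ℝ | Real.sqrt 2 * (p.1 - p.2.1) + p.2.2 ≤ 1})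
    (hX : X = T ∩ {p : ℝ × ℝ × ℝ | ∃ a b c : ℤ, p = ((a : ℝ), (b : ℝ), (c : ℝ))}) :
    closure (convexHull ℝ X) = T := by
  subst hT
  have hconv : Convex ℝ (convexHull ℝ X) := convex_convexHull ℝ X
  have hmem : ∀ i j k : ℤ, Real.sqrt 2 * ((i : ℝ) - (j : ℝ)) + (k : ℝ) ≤ 1 →
      ((i : ℝ), (j : ℝ), (k : ℝ)) ∈ convexHull ℝ X := by
    intro i j k hf
    apply subset_convexHull
    rw [hX]
    exact ⟨hf, ⟨i, j, k, rfl⟩⟩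
  -- main construction: every point strictly inside the halfspace is in the convex hull
  have hA : ∀ x y z : ℝ, Real.sqrt 2 * (x - y) + z < 1 → (x, y, z) ∈ convexHull ℝ X := by
    intro x y z hp
    by_cases hd : Real.sqrt 2 * (x - y) + z ≤ -3
    · exact deep_mem hconv hmem x y z hd
    · push_neg at hd
      obtain ⟨m, n, hmn1, hmn2⟩ := dense_sqrt2 (Real.sqrt 2 * (x - y) + z) hp
      set s := Real.sqrt 2 * (x - y) + z with hs
      set σ := Real.sqrt 2 * m + n with hσ
      have hq : ((m:ℝ), (0:ℝ), (n:ℝ)) ∈ convexHull ℝ X := by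
        have := hmem m 0 n (by push_cast; linarith)
        simpa using this
      have h3 : (0:ℝ) < σ + 3 := by linarith
      set lam := (σ - s)/(σ + 3) with hlam
      have hlam0 : 0 < lam := div_pos (by linarith) h3
      have hlamne : lam ≠ 0 := ne_of_gt hlam0
      have hlam1 : lam ≤ 1 := by
        rw [hlam, div_le_one h3]; linarith
      have heq : lam * (σ + 3) = σ - s := by
        rw [hlam]; field_simp
      -- the deep point
      have hdD : ((m:ℝ) + (x - m)/lam, (y - 0)/lam, (n:ℝ) + (z - n)/lam) ∈ convexHull ℝ X := by
        apply deep_mem hconv hmem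
        have : Real.sqrt 2 * (((m:ℝ) + (x - m)/lam) - (y - 0)/lam) + ((n:ℝ) + (z - n)/lam)
            = -3 := by
          field_simp
          nlinarith [heq]
        linarith [le_of_eq this]
      refine seg_mem hconv hlam0.le hlam1 hq hdD ?_
      rw [smul_tuple]; simp only [Prod.mk.injEq]
      refine ⟨by field_simp; ring, by field_simp; ring, by field_simp; ring⟩
  apply Set.Subset.antisymm
  · have hTconv : Convex ℝ {p : ℝ×ℝ×ℝ | Real.sqrt 2 * (p.1 - p.2.1) + p.2.2 ≤ 1} := by
      intro p hp q hq a b ha hb hab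
      simp only [Set.mem_setOf_eq] at *
      have e1 : (a • p + b • q).1 = a * p.1 + b * q.1 := rfl
      have e2 : (a • p + b • q).2.1 = a * p.2.1 + b * q.2.1 := rfl
      have e3 : (a • p + b • q).2.2 = a * p.2.2 + b * q.2.2 := rfl
      rw [e1, e2, e3]
      nlinarith [mul_le_mul_of_nonneg_left hp ha, mul_le_mul_of_nonneg_left hq hb]
    have hTclosed : IsClosed {p : ℝ×ℝ×ℝ | Real.sqrt 2 * (p.1 - p.2.1) + p.2.2 ≤ 1} := by
      have hc : Continuous fun p : ℝ×ℝ×ℝ => Real.sqrt 2 * (p.1 - p.2.1) + p.2.2 := by fun_prop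
      exact isClosed_le hc continuous_const
    exact closure_minimal
      (convexHull_min (by rw [hX]; exact Set.inter_subset_left) hTconv) hTclosed
  · intro p hp
    simp only [Set.mem_setOf_eq] at hp
    have htend : Filter.Tendsto (fun k : ℕ => ((p.1, p.2.1, p.2.2 - 1/((k:ℝ)+1)) : ℝ×ℝ×ℝ))
        Filter.atTop (nhds p) := by
      have h3 : Filter.Tendsto (fun k : ℕ => p.2.2 - 1/((k:ℝ)+1)) Filter.atTop (nhds p.2.2) := by
        have h0 := tendsto_one_div_add_atTop_nhds_zero_nat (𝕜 := ℝ)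
        simpa using tendsto_const_nhds.sub h0
      exact Filter.Tendsto.prodMk_nhds tendsto_const_nhds (Filter.Tendsto.prodMk_nhds tendsto_const_nhds h3)
    refine mem_closure_of_tendsto htend (Filter.Eventually.of_forall fun k => ?_)
    apply hA
    have hk : 0 < 1/((k:ℝ)+1) := by positivity
    linarith
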